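/- Assume the SpaceSaving guarantees with table size K on a stream of length N with sorted frequency function f. Then for every integer u with 0 ≤ u < K/2 one has c_K ≤ F^{res(u)}/(K − 2u). Consequently c_K ≤ min over all integers 0 ≤ u < K/2 of F^{res(u)}/(K − 2u). -/

import Mathlib

/-- tight analysis of SpaceSaving: under the SpaceSaving
guarantees with table size `K`, for every integer `u` with `0 ≤ u < K/2`,
`c K ≤ F^{res(u)} / (K - 2u)`, where `F^{res(u)} = ∑_{i=u+1}^n f i`.
(Hence `c K` is at most the minimum of these bounds over all such `u`.) -/
theorem stmt2
    (n K N : ℕ) (f c σ : ℕ → ℕ)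
    (hfmono : ∀ i ∈ Finset.Icc 1 n, ∀ j ∈ Finset.Icc 1 n, i ≤ j → f j ≤ f i)
    (hfsum : ∑ i ∈ Finset.Icc 1 n, f i = N)
    (hcmono : ∀ i ∈ Finset.Icc 1 K, ∀ j ∈ Finset.Icc 1 K, i ≤ j → c j ≤ c i)
    (hcsum : ∑ j ∈ Finset.Icc 1 K, c j = N)
    (hσmem : ∀ j ∈ Finset.Icc 1 K, σ j ∈ Finset.Icc 1 n)
    (hσinj : ∀ j ∈ Finset.Icc 1 K, ∀ j' ∈ Finset.Icc 1 K, σ j = σ j' → j = j')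
    (hlow : ∀ j ∈ Finset.Icc 1 K, c j ≤ f (σ j) + c K)
    (hup : ∀ j ∈ Finset.Icc 1 K, f (σ j) ≤ c j)
    (hout : ∀ i ∈ Finset.Icc 1 n, (∀ j ∈ Finset.Icc 1 K, σ j ≠ i) → f i ≤ c K)
    :
    ∀ u : ℕ, 2 * u < K →
      (c K : ℝ) ≤ (∑ i ∈ Finset.Icc (u + 1) n, (f i : ℝ)) / ((K : ℝ) - 2 * u) := by
  classical
  intro u hu
  have hK1 : 1 ≤ K := by omega
  have hKmem : K ∈ Finset.Icc 1 K := by simp [hK1]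
  -- K ≤ n
  have hKn : K ≤ n := by
    have h := Finset.card_le_card_of_injOn σ (fun j hj => hσmem j hj)
      (fun j hj j' hj' h => hσinj j hj j' hj' h)
    simpa using h
  have hun : u ≤ n := by omega
  -- A : counters pointing into top-u
  set A := (Finset.Icc 1 K).filter (fun j => σ j ≤ u) with hA
  have hAsub : A ⊆ Finset.Icc 1 K := Finset.filter_subset _ _
  have hAcard : A.card ≤ u := by
    have hmaps : ∀ j ∈ A, σ j ∈ Finset.Icc 1 u := by
      intro j hj
      have h2 := (Finset.mem_filter.mp hj).2
      have h1 := hσmem j (hAsub hj)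
      simp only [Finset.mem_Icc] at h1 ⊢
      omega
    have h := Finset.card_le_card_of_injOn σ hmaps
      (fun j hj j' hj' h => hσinj j (hAsub hj) j' (hAsub hj') h)
    simpa using h
  -- split the total frequency sum
  have hsplit : ∑ i ∈ Finset.Icc 1 u, f i + ∑ i ∈ Finset.Icc (u+1) n, f i
      = ∑ i ∈ Finset.Icc 1 n, f i := by
    have e1 : Finset.Icc 1 u = Finset.Ioc 0 u := by ext x; simp; omega
    have e2 : Finset.Icc (u+1) n = Finset.Ioc u n := by ext x; simp
    have e3 : Finset.Icc 1 n = Finset.Ioc 0 n := by ext x; simp; omega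
    rw [e1, e2, e3]
    exact Finset.sum_Ioc_consecutive _ (Nat.zero_le u) hun
  -- head sum bound : ∑_{i ≤ u} f i ≤ ∑_{j ∈ A} c j + u * c K
  have hhead : ∑ i ∈ Finset.Icc 1 u, f i ≤ ∑ j ∈ A, c j + u * c K := by
    have himgsub : A.image σ ⊆ Finset.Icc 1 u := by
      intro i hi
      obtain ⟨j, hj, rfl⟩ := Finset.mem_image.mp hi
      have h2 := (Finset.mem_filter.mp hj).2
      have h1 := hσmem j (hAsub hj)
      simp only [Finset.mem_Icc] at h1 ⊢
      omega
    have hsd : ∑ i ∈ Finset.Icc 1 u \ A.image σ, f i + ∑ i ∈ A.image σ, f i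
        = ∑ i ∈ Finset.Icc 1 u, f i := Finset.sum_sdiff himgsub
    have h1 : ∑ i ∈ A.image σ, f i ≤ ∑ j ∈ A, c j := by
      rw [Finset.sum_image
        (fun j hj j' hj' h => hσinj j (hAsub hj) j' (hAsub hj') h)]
      exact Finset.sum_le_sum (fun j hj => hup j (hAsub hj))
    have h2 : ∑ i ∈ Finset.Icc 1 u \ A.image σ, f i ≤ u * c K := by
      calc ∑ i ∈ Finset.Icc 1 u \ A.image σ, f i
          ≤ (Finset.Icc 1 u \ A.image σ).card * c K := by
            apply Finset.sum_le_card_nsmul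
            intro i hi
            have hi' := Finset.mem_sdiff.mp hi
            have hiu := Finset.mem_Icc.mp hi'.1
            apply hout i (Finset.mem_Icc.mpr ⟨hiu.1, le_trans hiu.2 hun⟩)
            intro j hj hji
            apply hi'.2
            apply Finset.mem_image.mpr
            refine ⟨j, ?_, hji⟩
            apply Finset.mem_filter.mpr
            exact ⟨hj, by omega⟩
        _ ≤ u * c K := by
            apply Nat.mul_le_mul_right
            calc (Finset.Icc 1 u \ A.image σ).card ≤ (Finset.Icc 1 u).card :=
                  Finset.card_le_card (Finset.sdiff_subset)
              _ = u := by simp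
    omega
  -- counters outside A are each at least c K
  have htail : (K - A.card) * c K + ∑ j ∈ A, c j ≤ ∑ j ∈ Finset.Icc 1 K, c j := by
    rw [← Finset.sum_sdiff hAsub]
    have h2 : (Finset.Icc 1 K \ A).card = K - A.card := by
      rw [Finset.card_sdiff_of_subset hAsub]
      simp
    have h1 : (K - A.card) * c K ≤ ∑ j ∈ Finset.Icc 1 K \ A, c j := by
      rw [← h2]
      apply Finset.card_nsmul_le_sum
      intro j hj
      have hj' := (Finset.mem_sdiff.mp hj).1
      exact hcmono j hj' K hKmem (Finset.mem_Icc.mp hj').2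
    exact Nat.add_le_add_right h1 _
  -- main natural-number inequality
  have hmain : (K - u) * c K ≤ u * c K + ∑ i ∈ Finset.Icc (u+1) n, f i := by
    have hNc : ∑ j ∈ Finset.Icc 1 K, c j = ∑ i ∈ Finset.Icc 1 n, f i := by
      rw [hcsum, hfsum]
    have hle : (K - u) * c K ≤ (K - A.card) * c K :=
      Nat.mul_le_mul_right _ (by omega)
    have hchain : (K - A.card) * c K + ∑ j ∈ A, c j
        ≤ (∑ j ∈ A, c j + u * c K) + ∑ i ∈ Finset.Icc (u+1) n, f i := by
      calc (K - A.card) * c K + ∑ j ∈ A, c j ≤ ∑ j ∈ Finset.Icc 1 K, c j := htail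
        _ = ∑ i ∈ Finset.Icc 1 u, f i + ∑ i ∈ Finset.Icc (u+1) n, f i := by
            rw [hNc, ← hsplit]
        _ ≤ (∑ j ∈ A, c j + u * c K) + ∑ i ∈ Finset.Icc (u+1) n, f i :=
            Nat.add_le_add_right hhead _
    have h3 : (K - A.card) * c K ≤ u * c K + ∑ i ∈ Finset.Icc (u+1) n, f i := by
      set X := (K - A.card) * c K
      set Y := u * c K
      set S := ∑ j ∈ A, c j
      set F := ∑ i ∈ Finset.Icc (u+1) n, f i
      omega
    exact le_trans hle h3
  -- pass to the reals
  have hpos : (0 : ℝ) < (K : ℝ) - 2 * u := by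
    have h2 : (2 * u : ℕ) < K := hu
    have h := Nat.cast_lt (α := ℝ) |>.mpr h2
    push_cast at h
    linarith
  rw [le_div_iff₀ hpos]
  have hcast : ((K - u : ℕ) : ℝ) = (K : ℝ) - u := by
    rw [Nat.cast_sub (by omega)]
  have h := Nat.cast_le (α := ℝ) |>.mpr hmain
  push_cast at h
  rw [hcast] at h
  push_cast
  nlinarith [h]
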